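/- In the hypergraph H with vertex sets X, Y, Z of size k+1 (weak vertices), A_1, A_2, A_3 of size k+2, B_1, B_2 of size ℓ ≥ 0, and edges A_1 ∪ B_1 ∪ {x_i} ∪ A_2, A_2 ∪ B_1 ∪ {z_i} ∪ A_3, and A_1 ∪ B_2 ∪ {y_i} ∪ A_3 for 1 ≤ i ≤ k+1, no singleton set {v} is a k-power dominating set; hence γ_p^k(H) ≥ 2. -/

import Mathlib

/-- A hypergraph on vertex type `V`, given by its finite set of (finite) edges. -/
structure FinsetHypergraph (V : Type*) where
  edges : Finset (Finset V)

namespace FinsetHypergraph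

variable {V : Type*}

/-- Two vertices are adjacent iff they are distinct and share an edge. -/
def Adj (H : FinsetHypergraph V) (u v : V) : Prop :=
  u ≠ v ∧ ∃ e ∈ H.edges, u ∈ e ∧ v ∈ e

/-- The underlying adjacency (simple) graph of a hypergraph. -/
def graph (H : FinsetHypergraph V) : SimpleGraph V where
  Adj := H.Adj
  symm := ⟨by
    rintro u v ⟨hne, e, he, hu, hv⟩
    exact ⟨hne.symm, e, he, hv, hu⟩⟩
  loopless := ⟨by
    rintro u ⟨hne, -⟩
    exact hne rfl⟩

/-- Closed neighborhood of a set of vertices. -/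
def closedNbhd (H : FinsetHypergraph V) (S : Set V) : Set V :=
  S ∪ {u | ∃ v ∈ S, H.Adj v u}

/-- `F` is a set of edges through `v` covering all neighbors of `v` outside `S`. -/
def Covers (H : FinsetHypergraph V) (v : V) (S : Set V) (F : Finset (Finset V)) : Prop :=
  F ⊆ H.edges ∧ (∀ e ∈ F, v ∈ e) ∧ ∀ u, H.Adj v u → u ∉ S → ∃ e ∈ F, u ∈ e

/-- The white degree of `v` with respect to the blue set `S`: the minimum number of
edges containing `v` that cover all neighbors of `v` outside `S`. -/
noncomputable def wdeg (H : FinsetHypergraph V) (v : V) (S : Set V) : ℕ :=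
  sInf {t | ∃ F, H.Covers v S F ∧ F.card ≤ t}

/-- One step of the `k`-forcing propagation: every blue vertex whose white
neighbors can be covered by at most `k` incident edges forces its neighbors blue. -/
def step (H : FinsetHypergraph V) (k : ℕ) (S : Set V) : Set V :=
  S ∪ {u | ∃ v ∈ S, H.Adj v u ∧ H.wdeg v S ≤ k}

/-- `D` is a `k`-power dominating set if iterating the propagation from `N[D]`
colors every vertex blue. -/
def IsPDS (H : FinsetHypergraph V) (k : ℕ) (D : Set V) : Prop :=
  ∃ t : ℕ, (H.step k)^[t] (H.closedNbhd D) = Set.univ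

/-- The `k`-power domination number. -/
noncomputable def pdn (H : FinsetHypergraph V) (k : ℕ) : ℕ :=
  sInf {t | ∃ D : Finset V, H.IsPDS k ↑D ∧ D.card ≤ t}

/-- A dominating set. -/
def Dominating (H : FinsetHypergraph V) (S : Set V) : Prop :=
  H.closedNbhd S = Set.univ

/-- The domination number. -/
noncomputable def gamma (H : FinsetHypergraph V) : ℕ :=
  sInf {t | ∃ D : Finset V, H.Dominating ↑D ∧ D.card ≤ t}

/-- An `r`-uniform hypergraph. -/
def Uniform (H : FinsetHypergraph V) (r : ℕ) : Prop :=
  ∀ e ∈ H.edges, e.card = r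

/-- Connectivity of the underlying adjacency graph. -/
def Connected (H : FinsetHypergraph V) : Prop := H.graph.Connected

/-- No isolated vertices: every vertex lies in some edge. -/
def NoIsolated (H : FinsetHypergraph V) : Prop :=
  ∀ v : V, ∃ e ∈ H.edges, v ∈ e

/-- External private neighbors of `v` with respect to `D`. -/
def epn (H : FinsetHypergraph V) (v : V) (D : Set V) : Set V :=
  {u | u ∉ D ∧ H.Adj v u ∧ ∀ w ∈ D, w ≠ v → ¬ H.Adj w u}

/-- Number of connected components of the subhypergraph induced on `D`
(with respect to adjacency within `D`). -/
noncomputable def numComponents (H : FinsetHypergraph V) (D : Set V) : ℕ :=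
  Nat.card (SimpleGraph.ConnectedComponent (SimpleGraph.induce D H.graph))


section AuxLemmas

variable {V : Type*}

lemma covers_set_nonempty [DecidableEq V] (H : FinsetHypergraph V) (v : V) (S : Set V) :
    {t | ∃ F, H.Covers v S F ∧ F.card ≤ t}.Nonempty := by
  refine ⟨(H.edges.filter (fun e => v ∈ e)).card,
    H.edges.filter (fun e => v ∈ e), ⟨Finset.filter_subset _ _, ?_, ?_⟩, le_rfl⟩
  · intro e he; exact (Finset.mem_filter.mp he).2
  · rintro u ⟨hne, e, he, hv, hu⟩ _
    exact ⟨e, Finset.mem_filter.mpr ⟨he, hv⟩, hu⟩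

lemma wdeg_anti [DecidableEq V] (H : FinsetHypergraph V) {S T : Set V} (h : S ⊆ T) (v : V) :
    H.wdeg v T ≤ H.wdeg v S := by
  obtain ⟨F, hF, hc⟩ := Nat.sInf_mem (H.covers_set_nonempty v S)
  exact Nat.sInf_le ⟨F, ⟨hF.1, hF.2.1, fun u hadj hu => hF.2.2 u hadj (fun h' => hu (h h'))⟩, hc⟩

lemma step_mono [DecidableEq V] (H : FinsetHypergraph V) (k : ℕ) {S T : Set V} (h : S ⊆ T) :
    H.step k S ⊆ H.step k T := by
  intro u hu
  simp only [step, Set.mem_union, Set.mem_setOf_eq] at hu ⊢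
  rcases hu with hu | ⟨v, hv, hadj, hw⟩
  · exact Or.inl (h hu)
  · exact Or.inr ⟨v, h hv, hadj, le_trans (H.wdeg_anti h v) hw⟩

lemma iterate_subset [DecidableEq V] (H : FinsetHypergraph V) (k : ℕ) {S T : Set V}
    (hST : S ⊆ T) (hT : H.step k T = T) (t : ℕ) : (H.step k)^[t] S ⊆ T := by
  induction t with
  | zero => exact hST
  | succ n ih =>
    rw [Function.iterate_succ_apply']
    calc (H.step k) ((H.step k)^[n] S) ⊆ H.step k T := H.step_mono k ih
    _ = T := hT

lemma main_core [DecidableEq V] (H : FinsetHypergraph V) (k : ℕ)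
    (W C : Finset V) (hW : W.Nonempty) (hWC : Disjoint W C)
    (hcard : k + 1 ≤ W.card)
    (hedge : ∀ u ∈ W, ∀ e ∈ H.edges, u ∈ e → e = C ∪ {u})
    (hin : ∀ u ∈ W, C ∪ {u} ∈ H.edges)
    (D : Set V) (hD : ∀ v ∈ D, v ∉ W ∧ v ∉ C) :
    ¬ H.IsPDS k D := by
  have hbound : ∀ v : V, (∃ u ∈ W, H.Adj v u) → k + 1 ≤ H.wdeg v ((↑W : Set V)ᶜ) := by
    rintro v ⟨u, huW, hne, e, he, hve, hue⟩
    have hec := hedge u huW e he hue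
    subst hec
    have hvC : v ∈ C := by
      rcases Finset.mem_union.mp hve with h | h
      · exact h
      · exact absurd (Finset.mem_singleton.mp h) hne
    have hmem : H.wdeg v ((↑W : Set V)ᶜ) ∈
        {t | ∃ F, H.Covers v ((↑W : Set V)ᶜ) F ∧ F.card ≤ t} :=
      Nat.sInf_mem (H.covers_set_nonempty v _)
    obtain ⟨F, hF, hc⟩ := hmem
    have himg : W.image (fun w => C ∪ {w}) ⊆ F := by
      intro e' he'
      obtain ⟨w, hwW, rfl⟩ := Finset.mem_image.mp he'
      have hvw : v ≠ w := fun hvw => Finset.disjoint_right.mp hWC hvC (hvw ▸ hwW)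
      have hadj : H.Adj v w := ⟨hvw, C ∪ {w}, hin w hwW,
        Finset.mem_union_left _ hvC, Finset.mem_union_right _ (Finset.mem_singleton_self w)⟩
      have hwwhite : w ∉ ((↑W : Set V)ᶜ) := by simp [hwW]
      obtain ⟨e2, he2F, hwe2⟩ := hF.2.2 w hadj hwwhite
      have he2 := hedge w hwW e2 (hF.1 he2F) hwe2
      rwa [← he2]
    have hinj : Set.InjOn (fun w => C ∪ {w}) ↑W := by
      intro a ha b hb hab
      have hab' : C ∪ {a} = C ∪ {b} := hab
      have haC : a ∈ C ∪ {b} := by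
        rw [← hab']; exact Finset.mem_union_right _ (Finset.mem_singleton_self a)
      rcases Finset.mem_union.mp haC with h | h
      · exact absurd h (Finset.disjoint_left.mp hWC ha)
      · exact Finset.mem_singleton.mp h
    calc k + 1 ≤ W.card := hcard
      _ = (W.image (fun w => C ∪ {w})).card := (Finset.card_image_of_injOn hinj).symm
      _ ≤ F.card := Finset.card_le_card himg
      _ ≤ _ := hc
  have hfix : H.step k ((↑W : Set V)ᶜ) = (↑W : Set V)ᶜ := by
    apply subset_antisymm
    · intro u hu
      simp only [step, Set.mem_union, Set.mem_setOf_eq] at hu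
      rcases hu with hu | ⟨v, hv, hadj, hw⟩
      · exact hu
      · by_contra huc
        have huW : u ∈ W := by simpa using huc
        have := hbound v ⟨u, huW, hadj⟩
        omega
    · intro u hu
      simp only [step, Set.mem_union]
      exact Or.inl hu
  have hsub : H.closedNbhd D ⊆ ((↑W : Set V)ᶜ) := by
    intro u hu
    simp only [closedNbhd, Set.mem_union, Set.mem_setOf_eq] at hu
    rcases hu with hu | ⟨v, hvD, hne, e, he, hve, hue⟩
    · simpa using (hD u hu).1
    · simp only [Set.mem_compl_iff, Finset.mem_coe]
      intro huW
      have hec := hedge u huW e he hue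
      subst hec
      rcases Finset.mem_union.mp hve with h | h
      · exact (hD v hvD).2 h
      · exact (hD v hvD).1 (Finset.mem_singleton.mp h ▸ huW)
  rintro ⟨t, ht⟩
  obtain ⟨w, hw⟩ := hW
  have hwc : w ∈ ((↑W : Set V)ᶜ) := by
    have hsub2 := H.iterate_subset k hsub hfix t
    rw [ht] at hsub2
    exact hsub2 (Set.mem_univ w)
  simp only [Set.mem_compl_iff, Finset.mem_coe] at hwc
  exact hwc hw

end AuxLemmas

end FinsetHypergraph

set_option maxHeartbeats 2000000 in
open FinsetHypergraph in
/-- In the counterexample hypergraph (weak vertex sets `X, Y, Z` of size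
`k+1`, strong sets `A₁, A₂, A₃` of size `k+2`, sets `B₁, B₂` of size `ℓ`, with the
three families of edges), no singleton is a `k`-power dominating set; hence
`γ_p^k(H) ≥ 2`. -/
theorem counterexample_no_singleton {V : Type*} [Fintype V] [DecidableEq V]
    (H : FinsetHypergraph V) (k ℓ : ℕ) (hk : 1 ≤ k)
    (A1 A2 A3 B1 B2 X Y Z : Finset V)
    (hA1 : A1.card = k + 2) (hA2 : A2.card = k + 2) (hA3 : A3.card = k + 2)
    (hB1 : B1.card = ℓ) (hB2 : B2.card = ℓ)
    (hX : X.card = k + 1) (hY : Y.card = k + 1) (hZ : Z.card = k + 1)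
    (hdisj : List.Pairwise Disjoint [A1, A2, A3, B1, B2, X, Y, Z])
    (huniv : A1 ∪ A2 ∪ A3 ∪ B1 ∪ B2 ∪ X ∪ Y ∪ Z = Finset.univ)
    (hedges : H.edges =
      X.image (fun x => A1 ∪ B1 ∪ {x} ∪ A2) ∪
      Z.image (fun z => A2 ∪ B1 ∪ {z} ∪ A3) ∪
      Y.image (fun y => A1 ∪ B2 ∪ {y} ∪ A3)) :
    (∀ v : V, ¬ H.IsPDS k {v}) ∧ 2 ≤ H.pdn k := by
  have dis : ∀ {P Q : Finset V} {a : V}, Disjoint P Q → a ∈ P → a ∈ Q → False :=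
    fun h ha hb => Finset.disjoint_left.mp h ha hb
  simp only [List.pairwise_cons, List.mem_cons, List.not_mem_nil, forall_eq_or_imp, forall_eq,
    List.mem_singleton, false_implies, implies_true, and_true] at hdisj
  obtain ⟨⟨d12, d13, d1b1, d1b2, d1X, d1Y, d1Z⟩, ⟨d23, d2b1, d2b2, d2X, d2Y, d2Z⟩,
    ⟨d3b1, d3b2, d3X, d3Y, d3Z⟩, ⟨db12, db1X, db1Y, db1Z⟩, ⟨db2X, db2Y, db2Z⟩,
    ⟨dXY, dXZ⟩, dYZ, -⟩ := hdisj
  -- edge characterizations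
  have hXc : ∀ u ∈ X, ∀ e ∈ H.edges, u ∈ e → e = (A1 ∪ B1 ∪ A2) ∪ {u} := by
    intro u hu e he hue
    rw [hedges] at he
    simp only [Finset.mem_union, Finset.mem_image] at he
    rcases he with (⟨x, hx, rfl⟩ | ⟨z, hz, rfl⟩) | ⟨y, hy, rfl⟩
    · simp only [Finset.mem_union, Finset.mem_singleton] at hue
      have hux : u = x := by
        rcases hue with ((h | h) | h) | h
        · exact (dis d1X h hu).elim
        · exact (dis db1X h hu).elim
        · exact h
        · exact (dis d2X h hu).elim
      subst hux
      ext a; simp only [Finset.mem_union, Finset.mem_singleton]; tauto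
    · exfalso
      simp only [Finset.mem_union, Finset.mem_singleton] at hue
      rcases hue with ((h | h) | h) | h
      · exact dis d2X h hu
      · exact dis db1X h hu
      · exact dis dXZ hu (by rwa [h])
      · exact dis d3X h hu
    · exfalso
      simp only [Finset.mem_union, Finset.mem_singleton] at hue
      rcases hue with ((h | h) | h) | h
      · exact dis d1X h hu
      · exact dis db2X h hu
      · exact dis dXY hu (by rwa [h])
      · exact dis d3X h hu
  have hYc : ∀ u ∈ Y, ∀ e ∈ H.edges, u ∈ e → e = (A1 ∪ B2 ∪ A3) ∪ {u} := by
    intro u hu e he hue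
    rw [hedges] at he
    simp only [Finset.mem_union, Finset.mem_image] at he
    rcases he with (⟨x, hx, rfl⟩ | ⟨z, hz, rfl⟩) | ⟨y, hy, rfl⟩
    · exfalso
      simp only [Finset.mem_union, Finset.mem_singleton] at hue
      rcases hue with ((h | h) | h) | h
      · exact dis d1Y h hu
      · exact dis db1Y h hu
      · exact dis dXY (by rwa [h]) hu
      · exact dis d2Y h hu
    · exfalso
      simp only [Finset.mem_union, Finset.mem_singleton] at hue
      rcases hue with ((h | h) | h) | h
      · exact dis d2Y h hu
      · exact dis db1Y h hu
      · exact dis dYZ hu (by rwa [h])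
      · exact dis d3Y h hu
    · simp only [Finset.mem_union, Finset.mem_singleton] at hue
      have huy : u = y := by
        rcases hue with ((h | h) | h) | h
        · exact (dis d1Y h hu).elim
        · exact (dis db2Y h hu).elim
        · exact h
        · exact (dis d3Y h hu).elim
      subst huy
      ext a; simp only [Finset.mem_union, Finset.mem_singleton]; tauto
  have hZc : ∀ u ∈ Z, ∀ e ∈ H.edges, u ∈ e → e = (A2 ∪ B1 ∪ A3) ∪ {u} := by
    intro u hu e he hue
    rw [hedges] at he
    simp only [Finset.mem_union, Finset.mem_image] at he
    rcases he with (⟨x, hx, rfl⟩ | ⟨z, hz, rfl⟩) | ⟨y, hy, rfl⟩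
    · exfalso
      simp only [Finset.mem_union, Finset.mem_singleton] at hue
      rcases hue with ((h | h) | h) | h
      · exact dis d1Z h hu
      · exact dis db1Z h hu
      · exact dis dXZ (by rwa [h]) hu
      · exact dis d2Z h hu
    · simp only [Finset.mem_union, Finset.mem_singleton] at hue
      have huz : u = z := by
        rcases hue with ((h | h) | h) | h
        · exact (dis d2Z h hu).elim
        · exact (dis db1Z h hu).elim
        · exact h
        · exact (dis d3Z h hu).elim
      subst huz
      ext a; simp only [Finset.mem_union, Finset.mem_singleton]; tauto
    · exfalso
      simp only [Finset.mem_union, Finset.mem_singleton] at hue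
      rcases hue with ((h | h) | h) | h
      · exact dis d1Z h hu
      · exact dis db2Z h hu
      · exact dis dYZ (by rwa [h]) hu
      · exact dis d3Z h hu
  have hXin : ∀ u ∈ X, (A1 ∪ B1 ∪ A2) ∪ {u} ∈ H.edges := by
    intro u hu; rw [hedges]
    refine Finset.mem_union_left _ (Finset.mem_union_left _ (Finset.mem_image.mpr ⟨u, hu, ?_⟩))
    ext a; simp only [Finset.mem_union, Finset.mem_singleton]; tauto
  have hYin : ∀ u ∈ Y, (A1 ∪ B2 ∪ A3) ∪ {u} ∈ H.edges := by
    intro u hu; rw [hedges]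
    refine Finset.mem_union_right _ (Finset.mem_image.mpr ⟨u, hu, ?_⟩)
    ext a; simp only [Finset.mem_union, Finset.mem_singleton]; tauto
  have hZin : ∀ u ∈ Z, (A2 ∪ B1 ∪ A3) ∪ {u} ∈ H.edges := by
    intro u hu; rw [hedges]
    refine Finset.mem_union_left _ (Finset.mem_union_right _ (Finset.mem_image.mpr ⟨u, hu, ?_⟩))
    ext a; simp only [Finset.mem_union, Finset.mem_singleton]; tauto
  have hXne : X.Nonempty := Finset.card_pos.mp (by rw [hX]; omega)
  have hYne : Y.Nonempty := Finset.card_pos.mp (by rw [hY]; omega)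
  have hZne : Z.Nonempty := Finset.card_pos.mp (by rw [hZ]; omega)
  have keyX : ∀ D : Set V, (∀ v ∈ D, v ∉ X ∧ v ∉ A1 ∪ B1 ∪ A2) → ¬ H.IsPDS k D :=
    fun D hD => H.main_core k X (A1 ∪ B1 ∪ A2) hXne
      (Finset.disjoint_union_right.mpr ⟨Finset.disjoint_union_right.mpr ⟨d1X.symm, db1X.symm⟩,
        d2X.symm⟩)
      (by rw [hX]) hXc hXin D hD
  have keyY : ∀ D : Set V, (∀ v ∈ D, v ∉ Y ∧ v ∉ A1 ∪ B2 ∪ A3) → ¬ H.IsPDS k D :=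
    fun D hD => H.main_core k Y (A1 ∪ B2 ∪ A3) hYne
      (Finset.disjoint_union_right.mpr ⟨Finset.disjoint_union_right.mpr ⟨d1Y.symm, db2Y.symm⟩,
        d3Y.symm⟩)
      (by rw [hY]) hYc hYin D hD
  have keyZ : ∀ D : Set V, (∀ v ∈ D, v ∉ Z ∧ v ∉ A2 ∪ B1 ∪ A3) → ¬ H.IsPDS k D :=
    fun D hD => H.main_core k Z (A2 ∪ B1 ∪ A3) hZne
      (Finset.disjoint_union_right.mpr ⟨Finset.disjoint_union_right.mpr ⟨d2Z.symm, db1Z.symm⟩,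
        d3Z.symm⟩)
      (by rw [hZ]) hZc hZin D hD
  have part1 : ∀ v : V, ¬ H.IsPDS k {v} := by
    intro v
    have hv : v ∈ A1 ∪ A2 ∪ A3 ∪ B1 ∪ B2 ∪ X ∪ Y ∪ Z := by
      rw [huniv]; exact Finset.mem_univ v
    simp only [Finset.mem_union] at hv
    have single : ∀ (P : V → Prop), P v → ∀ u ∈ ({v} : Set V), P u := by
      intro P hP u hu
      rw [Set.mem_singleton_iff] at hu; subst hu; exact hP
    rcases hv with ((((((h | h) | h) | h) | h) | h) | h) | h
    · refine keyZ {v} (single _ ?_)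
      simp only [Finset.mem_union, not_or]
      exact ⟨fun hm => dis d1Z h hm, ⟨fun hm => dis d12 h hm, fun hm => dis d1b1 h hm⟩,
        fun hm => dis d13 h hm⟩
    · refine keyY {v} (single _ ?_)
      simp only [Finset.mem_union, not_or]
      exact ⟨fun hm => dis d2Y h hm, ⟨fun hm => dis d12.symm h hm, fun hm => dis d2b2 h hm⟩,
        fun hm => dis d23 h hm⟩
    · refine keyX {v} (single _ ?_)
      simp only [Finset.mem_union, not_or]
      exact ⟨fun hm => dis d3X h hm, ⟨fun hm => dis d13.symm h hm, fun hm => dis d3b1 h hm⟩,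
        fun hm => dis d23.symm h hm⟩
    · refine keyY {v} (single _ ?_)
      simp only [Finset.mem_union, not_or]
      exact ⟨fun hm => dis db1Y h hm, ⟨fun hm => dis d1b1.symm h hm, fun hm => dis db12 h hm⟩,
        fun hm => dis d3b1.symm h hm⟩
    · refine keyX {v} (single _ ?_)
      simp only [Finset.mem_union, not_or]
      exact ⟨fun hm => dis db2X h hm, ⟨fun hm => dis d1b2.symm h hm, fun hm => dis db12.symm h hm⟩,
        fun hm => dis d2b2.symm h hm⟩
    · refine keyY {v} (single _ ?_)
      simp only [Finset.mem_union, not_or]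
      exact ⟨fun hm => dis dXY h hm, ⟨fun hm => dis d1X.symm h hm, fun hm => dis db2X.symm h hm⟩,
        fun hm => dis d3X.symm h hm⟩
    · refine keyX {v} (single _ ?_)
      simp only [Finset.mem_union, not_or]
      exact ⟨fun hm => dis dXY.symm h hm, ⟨fun hm => dis d1Y.symm h hm, fun hm => dis db1Y.symm h hm⟩,
        fun hm => dis d2Y.symm h hm⟩
    · refine keyX {v} (single _ ?_)
      simp only [Finset.mem_union, not_or]
      exact ⟨fun hm => dis dXZ.symm h hm, ⟨fun hm => dis d1Z.symm h hm, fun hm => dis db1Z.symm h hm⟩,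
        fun hm => dis d2Z.symm h hm⟩
  refine ⟨part1, ?_⟩
  have hne : {t | ∃ D : Finset V, H.IsPDS k ↑D ∧ D.card ≤ t}.Nonempty := by
    refine ⟨(Finset.univ : Finset V).card, Finset.univ, ⟨0, ?_⟩, le_rfl⟩
    simp [FinsetHypergraph.closedNbhd]
  simp only [FinsetHypergraph.pdn]
  obtain ⟨D, hPDS, hcard⟩ := Nat.sInf_mem hne
  by_contra hlt
  push_neg at hlt
  have hD1 : D.card ≤ 1 := by omega
  rcases Nat.lt_or_ge D.card 1 with h0 | h1
  · have hDe : D = ∅ := Finset.card_eq_zero.mp (by omega)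
    subst hDe
    exact keyX ∅ (by simp) (by simpa using hPDS)
  · have hone : D.card = 1 := le_antisymm hD1 h1
    obtain ⟨v, rfl⟩ := Finset.card_eq_one.mp hone
    exact part1 v (by simpa using hPDS)
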